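/- Let 0 ≤ f ∈ L¹(ℝ²) be dominated pointwise by a radially symmetric non-increasing function φ : ℝ₊ → ℝ₊ satisfying lim_{|x|→∞} φ(|x|)|x|² = 0. Then ∫_{ℝ²} f(y)/|x-y| dy = ‖f‖_{L¹(ℝ²)}/|x| + o(1/|x|) as |x| → ∞. -/

import Mathlib

open Real MeasureTheory Filter Metric
open scoped ENNReal

local notation "E" => EuclideanSpace ℝ (Fin 2)

lemma shell_bound (x : E) (R : ℝ) (hR : 0 < R) :
    ∫⁻ y in ball x R, (‖x - y‖₊ : ℝ≥0∞)⁻¹ ∂volume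
      ≤ ENNReal.ofReal (4 * R) * volume (ball (0 : E) 1) := by
  set v := volume (ball (0 : E) 1) with hv
  set A : ℕ → Set E := fun n => {y | ‖x - y‖ < R / 2 ^ n ∧ R / 2 ^ (n + 1) ≤ ‖x - y‖} with hA
  have hAmeas : ∀ n, MeasurableSet (A n) := by
    intro n
    have hc : Measurable fun y : E => ‖x - y‖ :=
      (continuous_const.sub continuous_id).norm.measurable
    exact (hc measurableSet_Iio).inter (hc measurableSet_Ici)
  have hcover : ball x R ⊆ {x} ∪ ⋃ n, A n := by
    intro y hy
    rcases eq_or_ne y x with rfl | hne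
    · exact Or.inl rfl
    · right
      have hpos : 0 < ‖x - y‖ := by
        rw [norm_pos_iff, sub_ne_zero]; exact Ne.symm hne
      have hex : ∃ n : ℕ, R / 2 ^ (n + 1) ≤ ‖x - y‖ := by
        obtain ⟨n, hn⟩ := pow_unbounded_of_one_lt (R / ‖x - y‖) one_lt_two
        refine ⟨n, ?_⟩
        rw [div_le_iff₀ (by positivity), pow_succ]
        rw [div_lt_iff₀ hpos] at hn
        nlinarith [pow_pos (zero_lt_two (α := ℝ)) n]
      classical
      set n := Nat.find hex with hn
      refine Set.mem_iUnion.2 ⟨n, ?_, Nat.find_spec hex⟩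
      rcases Nat.eq_zero_or_pos n with h0 | h0
      · rw [h0]
        simpa [mem_ball, dist_comm, dist_eq_norm, norm_sub_rev] using hy
      · have := Nat.find_min hex (m := n - 1) (by omega)
        push_neg at this
        have : ‖x - y‖ < R / 2 ^ (n - 1 + 1) := this
        simpa [Nat.sub_add_cancel h0] using this
  calc ∫⁻ y in ball x R, (‖x - y‖₊ : ℝ≥0∞)⁻¹ ∂volume
      ≤ ∫⁻ y in {x} ∪ ⋃ n, A n, (‖x - y‖₊ : ℝ≥0∞)⁻¹ ∂volume :=
        lintegral_mono_set hcover
    _ ≤ (∫⁻ y in {x}, (‖x - y‖₊ : ℝ≥0∞)⁻¹ ∂volume)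
        + ∫⁻ y in ⋃ n, A n, (‖x - y‖₊ : ℝ≥0∞)⁻¹ ∂volume := lintegral_union_le _ _ _
    _ = ∫⁻ y in ⋃ n, A n, (‖x - y‖₊ : ℝ≥0∞)⁻¹ ∂volume := by
        rw [setLIntegral_measure_zero _ _ (measure_singleton x), zero_add]
    _ ≤ ∑' n, ∫⁻ y in A n, (‖x - y‖₊ : ℝ≥0∞)⁻¹ ∂volume := lintegral_iUnion_le _ _
    _ ≤ ∑' n, ENNReal.ofReal (2 * R) * 2⁻¹ ^ n * v := by
        refine ENNReal.tsum_le_tsum fun n => ?_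
        have h1 : ∫⁻ y in A n, (‖x - y‖₊ : ℝ≥0∞)⁻¹ ∂volume
            ≤ ∫⁻ _ in A n, ENNReal.ofReal (2 ^ (n + 1) / R) ∂volume := by
          refine setLIntegral_mono' (hAmeas n) fun y hy => ?_
          have hpos : (0:ℝ) < R / 2 ^ (n + 1) := by positivity
          have h2 : ENNReal.ofReal (R / 2 ^ (n + 1)) ≤ (‖x - y‖₊ : ℝ≥0∞) := by
            rw [← enorm_eq_nnnorm, ← ofReal_norm]
            exact ENNReal.ofReal_le_ofReal hy.2
          calc (‖x - y‖₊ : ℝ≥0∞)⁻¹ ≤ (ENNReal.ofReal (R / 2 ^ (n + 1)))⁻¹ :=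
                ENNReal.inv_le_inv' h2
            _ = ENNReal.ofReal (2 ^ (n + 1) / R) := by
                rw [← ENNReal.ofReal_inv_of_pos hpos, inv_div]
        have h3 : volume (A n) ≤ ENNReal.ofReal ((R / 2 ^ n) ^ 2) * v := by
          have hsub : A n ⊆ ball x (R / 2 ^ n) := by
            intro y hy
            rw [mem_ball, dist_comm, dist_eq_norm]
            simpa [norm_sub_rev] using hy.1
          calc volume (A n) ≤ volume (ball x (R / 2 ^ n)) := measure_mono hsub
            _ = ENNReal.ofReal ((R / 2 ^ n) ^ 2) * v := by
                rw [Measure.addHaar_ball volume x (by positivity), finrank_euclideanSpace_fin, hv]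
        calc ∫⁻ y in A n, (‖x - y‖₊ : ℝ≥0∞)⁻¹ ∂volume
            ≤ ENNReal.ofReal (2 ^ (n + 1) / R) * volume (A n) := by
              rw [← setLIntegral_const (A n) _]  -- may need adjusting
              exact h1.trans_eq (by rw [setLIntegral_const])
          _ ≤ ENNReal.ofReal (2 ^ (n + 1) / R) * (ENNReal.ofReal ((R / 2 ^ n) ^ 2) * v) := by
              exact mul_le_mul_right h3 _
          _ = ENNReal.ofReal (2 * R) * 2⁻¹ ^ n * v := by
              rw [← mul_assoc, ← ENNReal.ofReal_mul (by positivity)]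
              congr 1
              have h2 : (2⁻¹ : ℝ≥0∞) = ENNReal.ofReal 2⁻¹ := by
                rw [ENNReal.ofReal_inv_of_pos two_pos, ENNReal.ofReal_ofNat]
              rw [h2, ← ENNReal.ofReal_pow (by norm_num), ← ENNReal.ofReal_mul (by positivity)]
              congr 1
              rw [inv_pow, pow_succ]
              field_simp
    _ = ENNReal.ofReal (2 * R) * (∑' n : ℕ, (2⁻¹:ℝ≥0∞) ^ n) * v := by
        rw [ENNReal.tsum_mul_right, ENNReal.tsum_mul_left]
    _ = ENNReal.ofReal (4 * R) * v := by
        rw [ENNReal.tsum_geometric]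
        norm_num
        rw [← ENNReal.ofReal_ofNat, ← ENNReal.ofReal_mul (by positivity)]
        ring_nf
        rw [ENNReal.ofReal_mul (by positivity : (0:ℝ) ≤ R), ENNReal.ofReal_ofNat]
        ring

set_option maxHeartbeats 1000000 in
lemma near_bound (f : E → ℝ) (hf_nonneg : ∀ y, 0 ≤ f y)
    (hfm : AEStronglyMeasurable f volume) (x : E) (R M : ℝ) (hR : 0 < R) (hM : 0 ≤ M)
    (hbd : ∀ y ∈ ball x R, f y ≤ M) :
    IntegrableOn (fun y => f y / ‖x - y‖) (ball x R) volume ∧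
      ∫ y in ball x R, f y / ‖x - y‖ ≤ M * (4 * R) * (volume (ball (0 : E) 1)).toReal := by
  set v := volume (ball (0 : E) 1) with hv
  have hvfin : v ≠ ∞ := measure_ball_lt_top.ne
  have hc : Continuous fun y : E => ‖x - y‖ := (continuous_const.sub continuous_id).norm
  have hgm : AEStronglyMeasurable (fun y => f y / ‖x - y‖) (volume.restrict (ball x R)) :=
    (hfm.aemeasurable.div hc.measurable.aemeasurable).aestronglyMeasurable.restrict
  have hpt : ∀ y ∈ ball x R, (‖f y / ‖x - y‖‖₊ : ℝ≥0∞) ≤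
      ENNReal.ofReal M * (‖x - y‖₊ : ℝ≥0∞)⁻¹ := by
    intro y hy
    rcases eq_or_ne y x with rfl | hne
    · simp
    · have hpos : 0 < ‖x - y‖ := by rw [norm_pos_iff, sub_ne_zero]; exact fun h => hne h.symm
      have h1 : (‖f y / ‖x - y‖‖₊ : ℝ≥0∞) = ENNReal.ofReal (f y / ‖x - y‖) := by
        rw [← enorm_eq_nnnorm, ← ofReal_norm, Real.norm_eq_abs,
          abs_of_nonneg (div_nonneg (hf_nonneg y) hpos.le)]
      rw [h1]
      calc ENNReal.ofReal (f y / ‖x - y‖) ≤ ENNReal.ofReal (M / ‖x - y‖) :=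
            ENNReal.ofReal_le_ofReal (by gcongr; exact hbd y hy)
        _ = ENNReal.ofReal M * (‖x - y‖₊ : ℝ≥0∞)⁻¹ := by
            rw [ENNReal.ofReal_div_of_pos hpos, div_eq_mul_inv]
            congr 1
            rw [← Real.enorm_eq_ofReal hpos.le, enorm_norm, enorm_eq_nnnorm]
  have hlin : ∫⁻ y in ball x R, (‖f y / ‖x - y‖‖₊ : ℝ≥0∞) ∂volume
      ≤ ENNReal.ofReal M * (ENNReal.ofReal (4 * R) * v) := by
    calc ∫⁻ y in ball x R, (‖f y / ‖x - y‖‖₊ : ℝ≥0∞) ∂volume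
        ≤ ∫⁻ y in ball x R, ENNReal.ofReal M * (‖x - y‖₊ : ℝ≥0∞)⁻¹ ∂volume :=
          setLIntegral_mono' measurableSet_ball hpt
      _ = ENNReal.ofReal M * ∫⁻ y in ball x R, (‖x - y‖₊ : ℝ≥0∞)⁻¹ ∂volume :=
          lintegral_const_mul' _ _ ENNReal.ofReal_ne_top
      _ ≤ ENNReal.ofReal M * (ENNReal.ofReal (4 * R) * v) :=
          mul_le_mul_right (shell_bound x R hR) _
  have hint : IntegrableOn (fun y => f y / ‖x - y‖) (ball x R) volume := by
    refine ⟨hgm, ?_⟩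
    exact hlin.trans_lt (by
      refine ENNReal.mul_lt_top ENNReal.ofReal_lt_top ?_
      exact ENNReal.mul_lt_top ENNReal.ofReal_lt_top hvfin.lt_top)
  refine ⟨hint, ?_⟩
  calc ∫ y in ball x R, f y / ‖x - y‖ ≤ ‖∫ y in ball x R, f y / ‖x - y‖‖ := le_abs_self _
    _ ≤ (∫⁻ y in ball x R, (‖f y / ‖x - y‖‖₊ : ℝ≥0∞) ∂volume).toReal := by
        simpa only [ofReal_norm, enorm_eq_nnnorm] using
          norm_integral_le_lintegral_norm (μ := volume.restrict (ball x R))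
            (fun y => f y / ‖x - y‖)
    _ ≤ (ENNReal.ofReal M * (ENNReal.ofReal (4 * R) * v)).toReal := by
        apply ENNReal.toReal_mono _ hlin
        exact (ENNReal.mul_lt_top ENNReal.ofReal_lt_top
          (ENNReal.mul_lt_top ENNReal.ofReal_lt_top hvfin.lt_top)).ne
    _ = M * (4 * R) * v.toReal := by
        rw [ENNReal.toReal_mul, ENNReal.toReal_mul, ENNReal.toReal_ofReal hM,
          ENNReal.toReal_ofReal (by positivity)]
        ring

lemma ratio_lim (c : ℝ) : Tendsto (fun t : ℝ => t / (t + c)) atTop (nhds 1) := by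
  have h : Tendsto (fun t : ℝ => t + c) atTop atTop := tendsto_atTop_add_const_right _ c tendsto_id
  have h2 : Tendsto (fun t : ℝ => c / (t + c)) atTop (nhds 0) := tendsto_const_nhds.div_atTop h
  have h3 : Tendsto (fun t : ℝ => 1 - c / (t + c)) atTop (nhds 1) := by
    simpa using tendsto_const_nhds.sub h2
  refine h3.congr' ?_
  filter_upwards [h.eventually (eventually_gt_atTop 0)] with t ht
  field_simp
  ring

lemma norm_ratio_lim (y : E) :
    Tendsto (fun x : E => ‖x‖ / ‖x - y‖) (Filter.comap norm Filter.atTop) (nhds 1) := by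
  set L := Filter.comap (norm : E → ℝ) Filter.atTop
  have hnorm : Tendsto (fun x : E => ‖x‖) L atTop := tendsto_comap
  have hlow : Tendsto (fun x : E => ‖x‖ / (‖x‖ + ‖y‖)) L (nhds 1) := (ratio_lim ‖y‖).comp hnorm
  have hup : Tendsto (fun x : E => ‖x‖ / (‖x‖ + -‖y‖)) L (nhds 1) := (ratio_lim (-‖y‖)).comp hnorm
  have hev : ∀ᶠ x : E in L, ‖y‖ < ‖x‖ := hnorm.eventually (eventually_gt_atTop ‖y‖)
  refine tendsto_of_tendsto_of_tendsto_of_le_of_le' hlow hup ?_ ?_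
  · filter_upwards [hev] with x hx
    have h1 : 0 < ‖x - y‖ := by
      have := norm_sub_norm_le x y
      linarith
    have h2 : ‖x - y‖ ≤ ‖x‖ + ‖y‖ := norm_sub_le x y
    gcongr
  · filter_upwards [hev] with x hx
    have h1 : ‖x‖ + -‖y‖ ≤ ‖x - y‖ := by
      have := norm_sub_norm_le x y
      linarith
    gcongr
    linarith [norm_nonneg y]

/-- asymptotic Newton's theorem for the 2D Riesz potential. -/
theorem asymptotic_newton
    (f : EuclideanSpace ℝ (Fin 2) → ℝ)
    (hf_int : MeasureTheory.Integrable f volume)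
    (hf_nonneg : ∀ x, 0 ≤ f x)
    (φ : ℝ → ℝ)
    (hφ_nonneg : ∀ t, 0 ≤ t → 0 ≤ φ t)
    (hφ_anti : AntitoneOn φ (Set.Ici 0))
    (hdom : ∀ x, f x ≤ φ ‖x‖)
    (hφ_decay : Tendsto (fun t : ℝ => t ^ 2 * φ t) atTop (nhds 0)) :
    Tendsto (fun x : EuclideanSpace ℝ (Fin 2) =>
        ‖x‖ * ∫ y, f y / ‖x - y‖)
      (Filter.comap norm Filter.atTop) (nhds (∫ y, f y)) := by
  set L := Filter.comap (norm : E → ℝ) Filter.atTop with hL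
  have hnorm : Tendsto (fun x : E => ‖x‖) L atTop := tendsto_comap
  have hc : ∀ x : E, Continuous fun y : E => ‖x - y‖ :=
    fun x => (continuous_const.sub continuous_id).norm
  have hgm : ∀ x : E, AEStronglyMeasurable (fun y => f y / ‖x - y‖) (volume : Measure E) :=
    fun x => (hf_int.aestronglyMeasurable.aemeasurable.div
      (hc x).measurable.aemeasurable).aestronglyMeasurable
  have hev : ∀ᶠ x : E in L, 0 < ‖x‖ := hnorm.eventually (eventually_gt_atTop 0)
  have hdist : ∀ (x y : E) (r : ℝ), y ∈ ball x r ↔ ‖x - y‖ < r := by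
    intro x y r
    rw [mem_ball, dist_eq_norm, norm_sub_rev]
  -- near part: integrability and bound
  have hnear : ∀ x : E, 0 < ‖x‖ →
      IntegrableOn (fun y => f y / ‖x - y‖) (ball x (‖x‖ / 2)) volume ∧
      ∫ y in ball x (‖x‖ / 2), f y / ‖x - y‖ ≤
        φ (‖x‖ / 2) * (4 * (‖x‖ / 2)) * (volume (ball (0 : E) 1)).toReal := by
    intro x hx
    refine near_bound f hf_nonneg hf_int.aestronglyMeasurable x (‖x‖ / 2) (φ (‖x‖ / 2))
      (by positivity) (hφ_nonneg _ (by positivity)) ?_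
    intro y hy
    rw [hdist] at hy
    have h1 : ‖x‖ / 2 ≤ ‖y‖ := by
      have := norm_sub_norm_le x y
      linarith
    exact (hdom y).trans (hφ_anti (Set.mem_Ici.2 (by positivity)) (Set.mem_Ici.2 ((by positivity : (0:ℝ) ≤ ‖x‖/2).trans h1)) h1)
  -- far part: integrability
  have hfar_int : ∀ x : E, 0 < ‖x‖ →
      IntegrableOn (fun y => f y / ‖x - y‖) (ball x (‖x‖ / 2))ᶜ volume := by
    intro x hx
    refine Integrable.mono' (hf_int.const_mul (2 / ‖x‖)).restrict ((hgm x).restrict) ?_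
    refine (ae_restrict_iff' measurableSet_ball.compl).2 (ae_of_all _ fun y hy => ?_)
    have h2 : ‖x‖ / 2 ≤ ‖x - y‖ := by
      rw [Set.mem_compl_iff, hdist, not_lt] at hy
      exact hy
    have h3 : 0 < ‖x - y‖ := lt_of_lt_of_le (by positivity) h2
    rw [Real.norm_eq_abs, abs_of_nonneg (div_nonneg (hf_nonneg y) h3.le), mul_comm,
      div_le_iff₀ h3, mul_comm (f y), mul_assoc]
    calc f y = f y * 1 := by ring
      _ ≤ f y * (2 / ‖x‖ * ‖x - y‖) := by
          refine mul_le_mul_of_nonneg_left ?_ (hf_nonneg y)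
          rw [div_mul_eq_mul_div, le_div_iff₀ hx]
          linarith
      _ = 2 / ‖x‖ * (f y * ‖x - y‖) := by ring
  have hint : ∀ x : E, 0 < ‖x‖ → Integrable (fun y => f y / ‖x - y‖) volume := by
    intro x hx
    have := (hnear x hx).1.union (hfar_int x hx)
    rwa [Set.union_compl_self, integrableOn_univ] at this
  -- eventual splitting
  have heq : (fun x : E => ‖x‖ * ∫ y, f y / ‖x - y‖) =ᶠ[L]
      fun x : E => (‖x‖ * ∫ y in ball x (‖x‖ / 2), f y / ‖x - y‖) +
        ‖x‖ * ∫ y in (ball x (‖x‖ / 2))ᶜ, f y / ‖x - y‖ := by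
    filter_upwards [hev] with x hx
    rw [← mul_add, integral_add_compl measurableSet_ball (hint x hx)]
  -- T1 : near term tends to 0
  have T1 : Tendsto (fun x : E => ‖x‖ * ∫ y in ball x (‖x‖ / 2), f y / ‖x - y‖) L (nhds 0) := by
    have h5 : Tendsto (fun x : E => ‖x‖ / 2) L atTop := hnorm.atTop_div_const two_pos
    have hU : Tendsto (fun x : E =>
        8 * (volume (ball (0 : E) 1)).toReal * ((‖x‖ / 2) ^ 2 * φ (‖x‖ / 2))) L (nhds 0) := by
      have := (hφ_decay.comp h5).const_mul (8 * (volume (ball (0 : E) 1)).toReal)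
      simpa using this
    refine tendsto_of_tendsto_of_tendsto_of_le_of_le' tendsto_const_nhds hU ?_ ?_
    · refine Eventually.of_forall fun x => ?_
      refine mul_nonneg (norm_nonneg x) (setIntegral_nonneg measurableSet_ball fun y _ => ?_)
      exact div_nonneg (hf_nonneg y) (norm_nonneg _)
    · filter_upwards [hev] with x hx
      calc ‖x‖ * ∫ y in ball x (‖x‖ / 2), f y / ‖x - y‖
          ≤ ‖x‖ * (φ (‖x‖ / 2) * (4 * (‖x‖ / 2)) * (volume (ball (0 : E) 1)).toReal) :=
            mul_le_mul_of_nonneg_left (hnear x hx).2 (norm_nonneg x)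
        _ = 8 * (volume (ball (0 : E) 1)).toReal * ((‖x‖ / 2) ^ 2 * φ (‖x‖ / 2)) := by ring
  -- T2 : far term tends to ∫ f
  have T2 : Tendsto (fun x : E => ‖x‖ * ∫ y in (ball x (‖x‖ / 2))ᶜ, f y / ‖x - y‖) L
      (nhds (∫ y, f y)) := by
    have hrepr : ∀ x : E, ‖x‖ * ∫ y in (ball x (‖x‖ / 2))ᶜ, f y / ‖x - y‖ =
        ∫ y, ((ball x (‖x‖ / 2))ᶜ).indicator (fun y => ‖x‖ * (f y / ‖x - y‖)) y := by
      intro x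
      rw [integral_indicator measurableSet_ball.compl, integral_const_mul]
    simp only [hrepr]
    refine tendsto_integral_filter_of_dominated_convergence (fun y => 2 * f y) ?_ ?_
      (hf_int.const_mul 2) ?_
    · refine Eventually.of_forall fun x => ?_
      exact (((hgm x).const_mul ‖x‖).indicator measurableSet_ball.compl)
    · filter_upwards [hev] with x hx
      refine ae_of_all _ fun y => ?_
      by_cases hy : y ∈ (ball x (‖x‖ / 2))ᶜ
      · rw [Set.indicator_of_mem hy]
        have h2 : ‖x‖ / 2 ≤ ‖x - y‖ := by
          rw [Set.mem_compl_iff, hdist, not_lt] at hy; exact hy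
        have h3 : 0 < ‖x - y‖ := lt_of_lt_of_le (by positivity) h2
        rw [Real.norm_eq_abs,
          abs_of_nonneg (mul_nonneg (norm_nonneg x) (div_nonneg (hf_nonneg y) h3.le)),
          mul_div_assoc', div_le_iff₀ h3]
        nlinarith [hf_nonneg y]
      · rw [Set.indicator_of_notMem hy, norm_zero]
        exact mul_nonneg (by norm_num) (hf_nonneg y)
    · refine ae_of_all _ fun y => ?_
      have hev2 : ∀ᶠ x : E in L, 2 * ‖y‖ < ‖x‖ := hnorm.eventually (eventually_gt_atTop (2 * ‖y‖))
      have heq2 : (fun x : E => f y * (‖x‖ / ‖x - y‖)) =ᶠ[L]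
          fun x => ((ball x (‖x‖ / 2))ᶜ).indicator (fun y => ‖x‖ * (f y / ‖x - y‖)) y := by
        filter_upwards [hev2] with x hx
        have hy : y ∈ (ball x (‖x‖ / 2))ᶜ := by
          rw [Set.mem_compl_iff, hdist, not_lt]
          have := norm_sub_norm_le x y
          linarith
        rw [Set.indicator_of_mem hy]
        ring
      have h6 : Tendsto (fun x : E => f y * (‖x‖ / ‖x - y‖)) L (nhds (f y * 1)) := by
        rw [hL]
        exact (tendsto_const_nhds (x := f y)).mul (norm_ratio_lim y)
      rw [mul_one] at h6
      exact h6.congr' heq2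
  have hsum := T1.add T2
  rw [zero_add] at hsum
  exact hsum.congr' heq.symm
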